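/- Let C ⊂ ℝ² be a circle of radius r centered at c, parametrized counterclockwise by arclength, with unit tangents t_x at x and t_y at y. Let α be the biform with matrix 2zzᵀ/|z|² − I, z = x−y. Then for any two distinct points x, y on C, α evaluated on (t_x, t_y), i.e., t_xᵀ(2zzᵀ/|z|² − I)t_y, equals 1. -/

import Mathlib

open Real

/-- Let `C ⊂ ℝ²` be the circle of radius `r > 0` centered at `c`, traversed
counterclockwise, with unit tangent `t_x = (−sin θ, cos θ)` at the point
`x = c + r(cos θ, sin θ)`.  For any two distinct points `x, y` on `C`, the
biform with matrix `2zzᵀ/‖z‖² − I`, `z = x − y`, evaluated on `(t_x, t_y)`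
equals `1`:  `t_xᵀ(2zzᵀ/‖z‖² − I)t_y = 1`. -/
theorem stmt15 (c : ℝ × ℝ) (r : ℝ) (hr : 0 < r) (θ φ : ℝ)
    (x y : ℝ × ℝ)
    (hx : x = (c.1 + r * cos θ, c.2 + r * sin θ))
    (hy : y = (c.1 + r * cos φ, c.2 + r * sin φ))
    (hxy : x ≠ y) :
    let tx : ℝ × ℝ := (-sin θ, cos θ)
    let ty : ℝ × ℝ := (-sin φ, cos φ)
    let z : ℝ × ℝ := (x.1 - y.1, x.2 - y.2)
    2 * (z.1 * tx.1 + z.2 * tx.2) * (z.1 * ty.1 + z.2 * ty.2) / (z.1 ^ 2 + z.2 ^ 2)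
      - (tx.1 * ty.1 + tx.2 * ty.2) = 1 := by
  intro tx ty z
  subst hx hy
  simp only [tx, ty, z]
  have hz : ((c.1 + r * cos θ) - (c.1 + r * cos φ)) ^ 2
      + ((c.2 + r * sin θ) - (c.2 + r * sin φ)) ^ 2 ≠ 0 := by
    intro h
    apply hxy
    have h1 : r * cos θ = r * cos φ := by nlinarith [sq_nonneg ((c.1 + r * cos θ) - (c.1 + r * cos φ)), sq_nonneg ((c.2 + r * sin θ) - (c.2 + r * sin φ))]
    have h2 : r * sin θ = r * sin φ := by nlinarith [sq_nonneg ((c.1 + r * cos θ) - (c.1 + r * cos φ)), sq_nonneg ((c.2 + r * sin θ) - (c.2 + r * sin φ))]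
    have e1 : cos θ = cos φ := mul_left_cancel₀ hr.ne' h1
    have e2 : sin θ = sin φ := mul_left_cancel₀ hr.ne' h2
    ext <;> simp [e1, e2]
  rw [div_sub' hz, div_eq_one_iff_eq hz]
  have p1 := sin_sq_add_cos_sq θ
  have p2 := sin_sq_add_cos_sq φ
  linear_combination (r ^ 2 * (2 * sin φ ^ 2 + 2 * cos φ ^ 2 - cos θ * cos φ - sin θ * sin φ - 1)) * p1
    + (r ^ 2 * (1 - cos θ * cos φ - sin θ * sin φ)) * p2
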